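/- Birkhoff's contraction bound: for a 2×2 matrix T with strictly positive entries t_{11}, t_{12}, t_{21}, t_{22}, and strictly positive row vectors z, y, the Hilbert projective distance satisfies d(zT, yT) ≤ τ · d(z,y), where τ = (1 − √φ)/(1 + √φ) < 1 and φ = min(t_{11}t_{22}/(t_{21}t_{12}), t_{21}t_{12}/(t_{11}t_{22})). -/

import Mathlib

open Real Set

/-- Hilbert projective distance on the strictly positive cone of `ℝ²`:
`d(z,y) = |log((z₁/z₂)(y₂/y₁))|`. -/
noncomputable def hilbertDist2 (z y : Fin 2 → ℝ) : ℝ :=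
  |Real.log ((z 0 / z 1) * (y 1 / y 0))|

lemma tau_eq (a b c d : ℝ) (ha : 0 < a) (hb : 0 < b) (hc : 0 < c) (hd : 0 < d) :
    (1 - Real.sqrt (min (a * d / (c * b)) (c * b / (a * d)))) /
      (1 + Real.sqrt (min (a * d / (c * b)) (c * b / (a * d)))) =
      |Real.sqrt (a * d) - Real.sqrt (c * b)| / (Real.sqrt (a * d) + Real.sqrt (c * b)) := by
  have hp : 0 < Real.sqrt (a * d) := Real.sqrt_pos.2 (by positivity)
  have hq : 0 < Real.sqrt (c * b) := Real.sqrt_pos.2 (by positivity)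
  set p := Real.sqrt (a * d)
  set q := Real.sqrt (c * b)
  have hp2 : p ^ 2 = a * d := Real.sq_sqrt (by positivity)
  have hq2 : q ^ 2 = c * b := Real.sq_sqrt (by positivity)
  rcases le_total (a * d) (c * b) with h | h
  · have hmin : min (a*d/(c*b)) (c*b/(a*d)) = a*d/(c*b) :=
      min_eq_left (by rw [div_le_div_iff₀ (by positivity) (by positivity)]; nlinarith)
    have hs : Real.sqrt (a*d/(c*b)) = p / q := by
      rw [Real.sqrt_div (by positivity)]
    have hpq : p ≤ q := Real.sqrt_le_sqrt h
    have hq' : q ≠ 0 := ne_of_gt hq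
    rw [hmin, hs, abs_of_nonpos (by linarith),
      div_eq_div_iff (by positivity) (by positivity)]
    field_simp
    ring
  · have hmin : min (a*d/(c*b)) (c*b/(a*d)) = c*b/(a*d) :=
      min_eq_right (by rw [div_le_div_iff₀ (by positivity) (by positivity)]; nlinarith)
    have hs : Real.sqrt (c*b/(a*d)) = q / p := by
      rw [Real.sqrt_div (by positivity)]
    have hpq : q ≤ p := Real.sqrt_le_sqrt h
    have hp' : p ≠ 0 := ne_of_gt hp
    rw [hmin, hs, abs_of_nonneg (by linarith),
      div_eq_div_iff (by positivity) (by positivity)]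
    field_simp
    try exact Or.inl (by ring)

lemma key_ineq (a b c d t : ℝ) (ha : 0 < a) (hb : 0 < b) (hc : 0 < c) (hd : 0 < d)
    (ht : 0 < t) :
    |a * d - c * b| * t ≤
      (|Real.sqrt (a * d) - Real.sqrt (c * b)| / (Real.sqrt (a * d) + Real.sqrt (c * b))) *
        ((a * t + c) * (b * t + d)) := by
  have hp : 0 < Real.sqrt (a * d) := Real.sqrt_pos.2 (by positivity)
  have hq : 0 < Real.sqrt (c * b) := Real.sqrt_pos.2 (by positivity)
  set p := Real.sqrt (a * d) with hpdef
  set q := Real.sqrt (c * b) with hqdef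
  have hp2 : p ^ 2 = a * d := Real.sq_sqrt (by positivity)
  have hq2 : q ^ 2 = c * b := Real.sq_sqrt (by positivity)
  have hpqmul : p * q = Real.sqrt (a*b) * Real.sqrt (c*d) := by
    rw [hpdef, hqdef, ← Real.sqrt_mul (by positivity), ← Real.sqrt_mul (by positivity)]
    ring_nf
  have hab : Real.sqrt (a*b) ^ 2 = a * b := Real.sq_sqrt (by positivity)
  have hcd : Real.sqrt (c*d) ^ 2 = c * d := Real.sq_sqrt (by positivity)
  have expand : (Real.sqrt (a*b)*t - Real.sqrt (c*d))^2 =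
      Real.sqrt (a*b)^2*t^2 - 2*(Real.sqrt (a*b)*Real.sqrt (c*d))*t + Real.sqrt (c*d)^2 := by
    ring
  rw [hab, hcd] at expand
  have amgm : 2*(Real.sqrt (a*b)*Real.sqrt (c*d))*t ≤ a*b*t^2 + c*d := by
    nlinarith [sq_nonneg (Real.sqrt (a*b)*t - Real.sqrt (c*d))]
  have hp2t : p^2*t = a*d*t := by rw [hp2]
  have hq2t : q^2*t = c*b*t := by rw [hq2]
  have hpqt : p*q*t = Real.sqrt (a*b)*Real.sqrt (c*d)*t := by rw [hpqmul]
  have key : (p + q)^2 * t ≤ (a * t + c) * (b * t + d) := by nlinarith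
  have habs : |a * d - c * b| = |p - q| * (p + q) := by
    rw [← hp2, ← hq2, show p^2 - q^2 = (p - q) * (p + q) by ring, abs_mul,
      abs_of_pos (show (0:ℝ) < p + q from by linarith)]
  rw [habs, div_mul_eq_mul_div, le_div_iff₀ (by linarith)]
  calc |p - q| * (p + q) * t * (p + q) = |p - q| * ((p+q)^2 * t) := by ring
    _ ≤ |p - q| * ((a * t + c) * (b * t + d)) :=
        mul_le_mul_of_nonneg_left key (abs_nonneg _)

lemma lip_bound (a b c d : ℝ) (ha : 0 < a) (hb : 0 < b) (hc : 0 < c) (hd : 0 < d)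
    (x y : ℝ) :
    |(Real.log (a * Real.exp x + c) - Real.log (b * Real.exp x + d)) -
      (Real.log (a * Real.exp y + c) - Real.log (b * Real.exp y + d))| ≤
      (|Real.sqrt (a * d) - Real.sqrt (c * b)| / (Real.sqrt (a * d) + Real.sqrt (c * b))) *
        |x - y| := by
  set C := |Real.sqrt (a * d) - Real.sqrt (c * b)| / (Real.sqrt (a * d) + Real.sqrt (c * b))
    with hC
  have hderiv : ∀ s ∈ (Set.univ : Set ℝ),
      HasDerivWithinAt (fun s => Real.log (a * Real.exp s + c) - Real.log (b * Real.exp s + d))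
        ((a * Real.exp s) / (a * Real.exp s + c) - (b * Real.exp s) / (b * Real.exp s + d))
        Set.univ s := by
    intro s _
    have h1 : HasDerivAt (fun s => a * Real.exp s + c) (a * Real.exp s) s :=
      ((Real.hasDerivAt_exp s).const_mul a).add_const c
    have h2 : HasDerivAt (fun s => b * Real.exp s + d) (b * Real.exp s) s :=
      ((Real.hasDerivAt_exp s).const_mul b).add_const d
    exact ((h1.log (by positivity)).sub (h2.log (by positivity))).hasDerivWithinAt
  have hbound : ∀ s ∈ (Set.univ : Set ℝ),
      ‖(a * Real.exp s) / (a * Real.exp s + c) - (b * Real.exp s) / (b * Real.exp s + d)‖ ≤ C := by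
    intro s _
    have ht : 0 < Real.exp s := Real.exp_pos s
    set t := Real.exp s
    have hA : 0 < a * t + c := by positivity
    have hB : 0 < b * t + d := by positivity
    have heq : (a * t) / (a * t + c) - (b * t) / (b * t + d) =
        (t * (a * d - c * b)) / ((a * t + c) * (b * t + d)) := by
      field_simp
      ring
    rw [Real.norm_eq_abs, heq, abs_div, abs_of_pos (mul_pos hA hB),
      div_le_iff₀ (mul_pos hA hB)]
    calc |t * (a * d - c * b)| = |a * d - c * b| * t := by
          rw [abs_mul, abs_of_pos ht]; ring
      _ ≤ C * ((a * t + c) * (b * t + d)) := key_ineq a b c d t ha hb hc hd ht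
  have := Convex.norm_image_sub_le_of_norm_hasDerivWithin_le hderiv hbound convex_univ
    (Set.mem_univ y) (Set.mem_univ x)
  simpa [Real.norm_eq_abs] using this

lemma hd_eq (w x : Fin 2 → ℝ) (hw : ∀ i, 0 < w i) (hx : ∀ i, 0 < x i) :
    hilbertDist2 w x =
      |(Real.log (w 0) - Real.log (w 1)) - (Real.log (x 0) - Real.log (x 1))| := by
  unfold hilbertDist2
  rw [Real.log_mul (div_pos (hw 0) (hw 1)).ne' (div_pos (hx 1) (hx 0)).ne',
    Real.log_div (hw 0).ne' (hw 1).ne', Real.log_div (hx 1).ne' (hx 0).ne']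
  congr 1
  ring

/-- Birkhoff's contraction bound for a 2×2 strictly positive
matrix `T`: `d(zT, yT) ≤ τ · d(z,y)` with
`τ = (1 − √φ)/(1 + √φ) < 1`, `φ = min(t₁₁t₂₂/(t₂₁t₁₂), t₂₁t₁₂/(t₁₁t₂₂))`. -/
theorem stmt_6 (T : Matrix (Fin 2) (Fin 2) ℝ) (hT : ∀ i j, 0 < T i j)
    (z y : Fin 2 → ℝ) (hz : ∀ i, 0 < z i) (hy : ∀ i, 0 < y i) :
    hilbertDist2 (Matrix.vecMul z T) (Matrix.vecMul y T) ≤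
        ((1 - Real.sqrt (min (T 0 0 * T 1 1 / (T 1 0 * T 0 1))
              (T 1 0 * T 0 1 / (T 0 0 * T 1 1)))) /
          (1 + Real.sqrt (min (T 0 0 * T 1 1 / (T 1 0 * T 0 1))
              (T 1 0 * T 0 1 / (T 0 0 * T 1 1))))) * hilbertDist2 z y ∧
      (1 - Real.sqrt (min (T 0 0 * T 1 1 / (T 1 0 * T 0 1))
            (T 1 0 * T 0 1 / (T 0 0 * T 1 1)))) /
          (1 + Real.sqrt (min (T 0 0 * T 1 1 / (T 1 0 * T 0 1))
            (T 1 0 * T 0 1 / (T 0 0 * T 1 1)))) < 1 := by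
  have ha := hT 0 0
  have hb := hT 0 1
  have hc := hT 1 0
  have hd := hT 1 1
  have hφ : 0 < min (T 0 0 * T 1 1 / (T 1 0 * T 0 1)) (T 1 0 * T 0 1 / (T 0 0 * T 1 1)) :=
    lt_min (by positivity) (by positivity)
  have hsφ : 0 < Real.sqrt (min (T 0 0 * T 1 1 / (T 1 0 * T 0 1))
      (T 1 0 * T 0 1 / (T 0 0 * T 1 1))) := Real.sqrt_pos.2 hφ
  refine ⟨?_, (div_lt_one (by linarith)).2 (by linarith)⟩
  -- entries of the mapped vectors
  have hzT0 : Matrix.vecMul z T 0 = z 0 * T 0 0 + z 1 * T 1 0 := by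
    simp [Matrix.vecMul, dotProduct, Fin.sum_univ_two]
  have hzT1 : Matrix.vecMul z T 1 = z 0 * T 0 1 + z 1 * T 1 1 := by
    simp [Matrix.vecMul, dotProduct, Fin.sum_univ_two]
  have hyT0 : Matrix.vecMul y T 0 = y 0 * T 0 0 + y 1 * T 1 0 := by
    simp [Matrix.vecMul, dotProduct, Fin.sum_univ_two]
  have hyT1 : Matrix.vecMul y T 1 = y 0 * T 0 1 + y 1 * T 1 1 := by
    simp [Matrix.vecMul, dotProduct, Fin.sum_univ_two]
  have hz0 := hz 0; have hz1 := hz 1; have hy0 := hy 0; have hy1 := hy 1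
  have hzTpos : ∀ i, 0 < Matrix.vecMul z T i := by
    intro i
    fin_cases i
    · show (0:ℝ) < Matrix.vecMul z T 0; rw [hzT0]; positivity
    · show (0:ℝ) < Matrix.vecMul z T 1; rw [hzT1]; positivity
  have hyTpos : ∀ i, 0 < Matrix.vecMul y T i := by
    intro i
    fin_cases i
    · show (0:ℝ) < Matrix.vecMul y T 0; rw [hyT0]; positivity
    · show (0:ℝ) < Matrix.vecMul y T 1; rw [hyT1]; positivity
  rw [hd_eq _ _ hzTpos hyTpos, hd_eq _ _ hz hy,
    tau_eq (T 0 0) (T 0 1) (T 1 0) (T 1 1) ha hb hc hd]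
  have key := lip_bound (T 0 0) (T 0 1) (T 1 0) (T 1 1) ha hb hc hd
    (Real.log (z 0 / z 1)) (Real.log (y 0 / y 1))
  have ez : Real.exp (Real.log (z 0 / z 1)) = z 0 / z 1 := Real.exp_log (by positivity)
  have ey : Real.exp (Real.log (y 0 / y 1)) = y 0 / y 1 := Real.exp_log (by positivity)
  rw [ez, ey] at key
  have e1 : T 0 0 * (z 0 / z 1) + T 1 0 = Matrix.vecMul z T 0 / z 1 := by
    rw [hzT0]; field_simp
  have e2 : T 0 1 * (z 0 / z 1) + T 1 1 = Matrix.vecMul z T 1 / z 1 := by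
    rw [hzT1]; field_simp
  have e3 : T 0 0 * (y 0 / y 1) + T 1 0 = Matrix.vecMul y T 0 / y 1 := by
    rw [hyT0]; field_simp
  have e4 : T 0 1 * (y 0 / y 1) + T 1 1 = Matrix.vecMul y T 1 / y 1 := by
    rw [hyT1]; field_simp
  rw [e1, e2, e3, e4, Real.log_div (hzTpos 0).ne' hz1.ne',
    Real.log_div (hzTpos 1).ne' hz1.ne', Real.log_div (hyTpos 0).ne' hy1.ne',
    Real.log_div (hyTpos 1).ne' hy1.ne', Real.log_div hz0.ne' hz1.ne',
    Real.log_div hy0.ne' hy1.ne'] at key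
  calc |Real.log (Matrix.vecMul z T 0) - Real.log (Matrix.vecMul z T 1) -
          (Real.log (Matrix.vecMul y T 0) - Real.log (Matrix.vecMul y T 1))| =
      |Real.log (Matrix.vecMul z T 0) - Real.log (z 1) -
          (Real.log (Matrix.vecMul z T 1) - Real.log (z 1)) -
        (Real.log (Matrix.vecMul y T 0) - Real.log (y 1) -
          (Real.log (Matrix.vecMul y T 1) - Real.log (y 1)))| := by congr 1; ring
    _ ≤ _ := key
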